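/- arXiv:2308.13512 — 6 statements merged into one kernel-verified Lean document; each statement's English description precedes it below -/
import Mathlib

section
/- Let X_i ~ Ber(p_i, s_i) be independent scaled Bernoulli variables and P_i ~ Poi(ln(1/(1-p_i)), s̄_i) be independent scaled Poisson variables with s̄_i ≥ s_i for i = 1,...,m. If B = Σ X_i and P = Σ P_i, then P(B > 1) ≤ P(P > 1). -/
open MeasureTheory ProbabilityTheory
open scoped NNReal ENNReal

/-- Scaled Bernoulli distribution `Ber(p, s)`. -/
noncomputable def berS (p : ℝ) (hp : p ≤ 1) (s : ℝ) : PMF ℝ :=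
  (PMF.bernoulli (Real.toNNReal p) (Real.toNNReal_le_one.mpr hp)).map
    (fun b => if b then s else 0)

/-- Scaled Poisson distribution `Poi(λ, s)`: `s · Z` where `Z ~ Poisson(λ)`. -/
noncomputable def poiS (r : ℝ≥0) (s : ℝ) : PMF ℝ := (poissonPMF r).map (fun n => s * n)

/-- Convolution: distribution of the sum of independent discrete variables. -/
noncomputable def conv (X Y : PMF ℝ) : PMF ℝ := X.bind fun a => Y.map (fun b => a + b)

/-- Distribution of the sum of independent items. -/
noncomputable def pmfSum {m : ℕ} (f : Fin m → PMF ℝ) : PMF ℝ :=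
  (List.ofFn f).foldr conv (PMF.pure 0)

/-- Tail probability. -/
noncomputable def tail (X : PMF ℝ) (c : ℝ) : ℝ≥0∞ := X.toOuterMeasure {x | c < x}

lemma tail_eq (X : PMF ℝ) (c : ℝ) : tail X c = ∑' a, Set.indicator {x | c < x} X a :=
  PMF.toOuterMeasure_apply X _

lemma tail_le_one (X : PMF ℝ) (c : ℝ) : tail X c ≤ 1 := by
  rw [tail_eq, ← X.tsum_coe]
  exact ENNReal.tsum_le_tsum fun a => Set.indicator_le_self _ _ a

lemma tail_conv (X Y : PMF ℝ) (c : ℝ) :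
    tail (conv X Y) c = ∑' a, X a * tail Y (c - a) := by
  rw [tail, conv, PMF.toOuterMeasure_bind_apply]
  refine tsum_congr fun a => ?_
  rw [PMF.toOuterMeasure_map_apply, tail]
  have : (fun b => a + b) ⁻¹' {x | c < x} = {x | c - a < x} := by
    ext b; simp [sub_lt_iff_lt_add']
  rw [this]

lemma tail_conv' (X Y : PMF ℝ) (c : ℝ) :
    tail (conv X Y) c = ∑' (a : ℝ) (b : ℝ), if c < a + b then X a * Y b else 0 := by
  rw [tail_conv]
  refine tsum_congr fun a => ?_
  rw [tail_eq, ENNReal.tsum_mul_left.symm]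
  refine tsum_congr fun b => ?_
  simp only [Set.indicator]
  by_cases h : c - a < b <;> simp [h, sub_lt_iff_lt_add', Set.mem_setOf_eq]

lemma tail_conv_comm (X Y : PMF ℝ) (c : ℝ) :
    tail (conv X Y) c = tail (conv Y X) c := by
  rw [tail_conv', tail_conv', ENNReal.tsum_comm]
  exact tsum_congr fun b => tsum_congr fun a => by rw [add_comm, mul_comm]

lemma dom_conv {X Y X' Y' : PMF ℝ} (hXY : ∀ c, tail X c ≤ tail Y c)
    (hXY' : ∀ c, tail X' c ≤ tail Y' c) (c : ℝ) :
    tail (conv X X') c ≤ tail (conv Y Y') c := by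
  calc tail (conv X X') c ≤ tail (conv X Y') c := by
        rw [tail_conv, tail_conv]
        exact ENNReal.tsum_le_tsum fun a => mul_le_mul_right (hXY' _) _
    _ = tail (conv Y' X) c := tail_conv_comm X Y' c
    _ ≤ tail (conv Y' Y) c := by
        rw [tail_conv, tail_conv]
        exact ENNReal.tsum_le_tsum fun a => mul_le_mul_right (hXY _) _
    _ = tail (conv Y Y') c := tail_conv_comm Y' Y c

lemma tail_poiS (r : ℝ≥0) (sb : ℝ) (c : ℝ) :
    tail (poiS r sb) c = ∑' n : ℕ, Set.indicator {n : ℕ | c < sb * n} (⇑(poissonPMF r)) n := by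
  rw [tail, poiS, PMF.toOuterMeasure_map_apply]
  rw [show (do let a ← poissonPMF r; pure ((a : ℕ) : ℝ))
      = (poissonPMF r).map (fun n : ℕ => (n:ℝ)) from rfl]
  rw [PMF.toOuterMeasure_map_apply, PMF.toOuterMeasure_apply]
  rfl

lemma dom_ber_poi {p s sbar : ℝ} (hp0 : 0 < p) (hp1 : p < 1) (hs : 0 < s)
    (hsbar : s ≤ sbar) (c : ℝ) :
    tail (berS p hp1.le s) c ≤
      tail (poiS (Real.toNNReal (Real.log (1 / (1 - p)))) sbar) c := by
  set r := Real.toNNReal (Real.log (1 / (1 - p))) with hr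
  have h1p : (0:ℝ) < 1 - p := by linarith
  have hlog : Real.log (1 / (1 - p)) = - Real.log (1 - p) := by
    rw [one_div, Real.log_inv]
  have hlognn : 0 ≤ Real.log (1 / (1 - p)) := by
    rw [hlog]
    have := Real.log_nonpos (by linarith) (by linarith : (1:ℝ)-p ≤ 1)
    linarith
  have hrval : (r : ℝ) = - Real.log (1 - p) := by
    rw [hr, Real.coe_toNNReal _ hlognn, hlog]
  have hber : tail (berS p hp1.le s) c =
      (if c < 0 then (1 - ENNReal.ofReal p) else 0)
        + (if c < s then ENNReal.ofReal p else 0) := by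
    rw [tail, berS, PMF.toOuterMeasure_map_apply, PMF.toOuterMeasure_apply, tsum_bool]
    simp only [Set.indicator, Set.mem_preimage, Set.mem_setOf_eq, PMF.bernoulli_apply,
      Bool.cond_false, Bool.cond_true]
    norm_num <;> rfl
  have hpoi0 : poissonPMF r 0 = ENNReal.ofReal (1 - p) := by
    show ENNReal.ofReal (poissonPMFReal r 0) = _
    unfold poissonPMFReal
    rw [hrval]
    simp [Real.exp_log h1p]
  rcases lt_or_ge c 0 with hc | hc0
  · -- tail of poiS is 1
    have hset : {n : ℕ | c < sbar * n} = Set.univ := by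
      ext n
      have h1 : (0:ℝ) ≤ sbar * n := by
        have : (0:ℝ) ≤ sbar := le_trans hs.le hsbar
        positivity
      simp only [Set.mem_setOf_eq, Set.mem_univ, iff_true]
      linarith
    have : tail (poiS r sbar) c = 1 := by
      rw [tail_poiS, hset]
      simpa using (poissonPMF r).tsum_coe
    rw [this]
    exact tail_le_one _ _
  rcases lt_or_ge c s with hcs | hsc
  · -- main case
    have hberval : tail (berS p hp1.le s) c = ENNReal.ofReal p := by
      rw [hber, if_neg (not_lt.mpr hc0), if_pos hcs, zero_add]
    rw [hberval]
    have hle : ∑' n : ℕ, (if n = 0 then 0 else poissonPMF r n) ≤ tail (poiS r sbar) c := by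
      rw [tail_poiS]
      refine ENNReal.tsum_le_tsum fun n => ?_
      rcases Nat.eq_zero_or_pos n with h0 | h1
      · simp [h0]
      · have hn : (1:ℝ) ≤ (n:ℝ) := by exact_mod_cast h1
        have hmem : n ∈ {n : ℕ | c < sbar * n} := by
          simp only [Set.mem_setOf_eq]
          have : s ≤ sbar * n := by nlinarith
          linarith
        rw [Set.indicator_of_mem hmem]
        split <;> simp
    refine le_trans ?_ hle
    have hsum := (poissonPMF r).tsum_coe
    rw [ENNReal.tsum_eq_add_tsum_ite 0] at hsum
    have hadd : ENNReal.ofReal (1 - p) + ENNReal.ofReal p = 1 := by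
      rw [← ENNReal.ofReal_add (by linarith) hp0.le]
      norm_num
    have h1 := hsum.trans hadd.symm
    rw [hpoi0] at h1
    have hkey := (ENNReal.add_right_inj (a := ENNReal.ofReal (1 - p))
      ENNReal.ofReal_ne_top).mp h1
    refine le_of_eq ?_
    rw [← hkey]
    exact tsum_congr fun n => by split_ifs <;> rfl
  · -- c ≥ s : Bernoulli tail is 0
    have : tail (berS p hp1.le s) c = 0 := by
      rw [hber, if_neg (not_lt.mpr hc0), if_neg (not_lt.mpr hsc), zero_add]
    rw [this]
    exact zero_le

lemma pmfSum_succ {n : ℕ} (f : Fin (n+1) → PMF ℝ) :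
    pmfSum f = conv (f 0) (pmfSum fun i : Fin n => f i.succ) := by
  simp [pmfSum, List.ofFn_succ]

lemma dom_pmfSum : ∀ {m : ℕ} {f g : Fin m → PMF ℝ},
    (∀ i c, tail (f i) c ≤ tail (g i) c) → ∀ c, tail (pmfSum f) c ≤ tail (pmfSum g) c := by
  intro m
  induction m with
  | zero =>
    intro f g h c
    simp [pmfSum]
  | succ n ih =>
    intro f g h c
    rw [pmfSum_succ f, pmfSum_succ g]
    exact dom_conv (h 0) (ih (fun i c => h i.succ c)) c

/-- If `Xᵢ ~ Ber(pᵢ, sᵢ)` independent and `Pᵢ ~ Poi(ln(1/(1-pᵢ)), s̄ᵢ)` independent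
with `s̄ᵢ ≥ sᵢ`, `B = Σ Xᵢ`, `P = Σ Pᵢ`, then `ℙ(B > 1) ≤ ℙ(P > 1)`. -/
theorem stmt2 (m : ℕ) (p s sbar : Fin m → ℝ)
    (hp0 : ∀ i, 0 < p i) (hp1 : ∀ i, p i < 1) (hs : ∀ i, 0 < s i)
    (hsbar : ∀ i, s i ≤ sbar i)
    (B P : PMF ℝ)
    (hB : B = pmfSum fun i => berS (p i) (hp1 i).le (s i))
    (hP : P = pmfSum fun i =>
      poiS (Real.toNNReal (Real.log (1 / (1 - p i)))) (sbar i)) :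
    B.toMeasure {x | 1 < x} ≤ P.toMeasure {x | 1 < x} := by
  have hms : MeasurableSet {x : ℝ | 1 < x} := measurableSet_Ioi
  rw [hB, hP, PMF.toMeasure_apply_eq_toOuterMeasure_apply (hs := hms),
    PMF.toMeasure_apply_eq_toOuterMeasure_apply (hs := hms)]
  exact dom_pmfSum (fun i c => dom_ber_poi (hp0 i) (hp1 i) (hs i) (hsbar i) c) 1
end

section
/- Let X_i ~ Ber(p_i, s_i) with s_i ≤ s_min for all i, be independent scaled Bernoulli variables, and B = Σ_i X_i. If E(B) = Σ_i s_i p_i ≤ μ₀ < 1, then P(B > 1) < s_min · μ₀ / (1 - μ₀)². -/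
open MeasureTheory
open scoped NNReal ENNReal

noncomputable def eg {α : Type*} (μ : PMF α) (g : α → ℝ≥0∞) : ℝ≥0∞ := ∑' x, μ x * g x

lemma eg_pure {α : Type*} (a : α) (g : α → ℝ≥0∞) : eg (PMF.pure a) g = g a := by
  unfold eg
  rw [tsum_eq_single a]
  · simp [PMF.pure_apply]
  · intro b hb; simp [PMF.pure_apply, hb]

lemma eg_bind {α β : Type*} (μ : PMF α) (f : α → PMF β) (g : β → ℝ≥0∞) :
    eg (μ.bind f) g = ∑' a, μ a * eg (f a) g := by
  unfold eg
  simp only [PMF.bind_apply]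
  calc ∑' x, (∑' a, μ a * f a x) * g x
      = ∑' x, ∑' a, μ a * f a x * g x := by
        refine tsum_congr fun x => ?_; rw [← ENNReal.tsum_mul_right]
    _ = ∑' a, ∑' x, μ a * f a x * g x := ENNReal.tsum_comm
    _ = ∑' a, μ a * ∑' x, f a x * g x := by
        refine tsum_congr fun a => ?_
        simp_rw [mul_assoc]; rw [ENNReal.tsum_mul_left]

lemma eg_map {α β : Type*} (μ : PMF α) (h : α → β) (g : β → ℝ≥0∞) :
    eg (μ.map h) g = eg μ (fun a => g (h a)) := by
  show eg (μ.bind (PMF.pure ∘ h)) g = _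
  rw [eg_bind]
  conv_rhs => rw [eg]
  exact tsum_congr fun a => by rw [Function.comp_apply, eg_pure]

lemma eg_conv (X Y : PMF ℝ) (g : ℝ → ℝ≥0∞) :
    eg (conv X Y) g = eg X (fun a => eg Y (fun b => g (a + b))) := by
  unfold conv
  rw [eg_bind]
  conv_rhs => rw [eg]
  exact tsum_congr fun a => by rw [eg_map]

lemma eg_berS (p : ℝ) (hp0 : 0 ≤ p) (hp : p ≤ 1) (s : ℝ) (g : ℝ → ℝ≥0∞) :
    eg (berS p hp s) g = ENNReal.ofReal p * g s + ENNReal.ofReal (1 - p) * g 0 := by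
  unfold berS
  rw [eg_map]
  unfold eg
  rw [tsum_bool]
  norm_num [PMF.bernoulli_apply]
  have hc : ((Real.toNNReal p : ℝ≥0) : ℝ≥0∞) = ENNReal.ofReal p := rfl
  rw [ENNReal.ofReal_sub _ hp0, ENNReal.ofReal_one, ← hc]; ring

lemma eg_pmfSum_sq (m : ℕ) (p s : Fin m → ℝ) (hp0 : ∀ i, 0 ≤ p i) (hp1 : ∀ i, p i ≤ 1)
    (c : ℝ) :
    eg (pmfSum fun i => berS (p i) (hp1 i) (s i)) (fun x => ENNReal.ofReal ((x - c) ^ 2))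
      = ENNReal.ofReal
          ((∑ i, (s i) ^ 2 * p i * (1 - p i)) + (c - ∑ i, s i * p i) ^ 2) := by
  induction m generalizing c with
  | zero =>
    have : pmfSum (fun i : Fin 0 => berS (p i) (hp1 i) (s i)) = PMF.pure 0 := by
      simp [pmfSum]
    rw [this, eg_pure]
    norm_num
  | succ n ih =>
    have hunf : pmfSum (fun i : Fin (n + 1) => berS (p i) (hp1 i) (s i))
        = conv (berS (p 0) (hp1 0) (s 0))
            (pmfSum fun i : Fin n => berS (p i.succ) (hp1 i.succ) (s i.succ)) := by
      simp [pmfSum, List.ofFn_succ]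
    set Y := pmfSum fun i : Fin n => berS (p i.succ) (hp1 i.succ) (s i.succ) with hY
    set Vt := ∑ i : Fin n, (s i.succ) ^ 2 * p i.succ * (1 - p i.succ) with hVt
    set Mt := ∑ i : Fin n, s i.succ * p i.succ with hMt
    have hVt0 : 0 ≤ Vt := by
      apply Finset.sum_nonneg
      intro i _
      have h1 := hp0 i.succ; have h2 := hp1 i.succ
      exact mul_nonneg (mul_nonneg (sq_nonneg _) h1) (by linarith)
    rw [hunf, eg_conv, eg_berS _ (hp0 0) _]
    have e1 : eg Y (fun b => ENNReal.ofReal ((s 0 + b - c) ^ 2))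
        = ENNReal.ofReal (Vt + ((c - s 0) - Mt) ^ 2) := by
      have : (fun b => ENNReal.ofReal ((s 0 + b - c) ^ 2))
          = fun b => ENNReal.ofReal ((b - (c - s 0)) ^ 2) := by
        funext b; ring_nf
      rw [this]
      exact ih (fun i => p i.succ) (fun i => s i.succ) (fun i => hp0 i.succ)
        (fun i => hp1 i.succ) (c - s 0)
    have e2 : eg Y (fun b => ENNReal.ofReal ((0 + b - c) ^ 2))
        = ENNReal.ofReal (Vt + (c - Mt) ^ 2) := by
      have : (fun b => ENNReal.ofReal ((0 + b - c) ^ 2))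
          = fun b => ENNReal.ofReal ((b - c) ^ 2) := by
        funext b; ring_nf
      rw [this]
      exact ih (fun i => p i.succ) (fun i => s i.succ) (fun i => hp0 i.succ)
        (fun i => hp1 i.succ) c
    show ENNReal.ofReal (p 0) * eg Y (fun b => ENNReal.ofReal ((s 0 + b - c) ^ 2))
        + ENNReal.ofReal (1 - p 0) * eg Y (fun b => ENNReal.ofReal ((0 + b - c) ^ 2)) = _
    rw [e1, e2, ← ENNReal.ofReal_mul (hp0 0), ← ENNReal.ofReal_mul (by linarith [hp1 0]),
      ← ENNReal.ofReal_add (by nlinarith [hp0 0, hp1 0, sq_nonneg ((c - s 0) - Mt)])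
        (by nlinarith [hp0 0, hp1 0, sq_nonneg (c - Mt)])]
    congr 1
    rw [Fin.sum_univ_succ, Fin.sum_univ_succ]
    ring

/-- Minor items: if `Xᵢ ~ Ber(pᵢ, sᵢ)` are independent with `sᵢ ≤ s_min` and
`𝔼(B) = Σᵢ sᵢ pᵢ ≤ μ₀ < 1`, then `ℙ(B > 1) < s_min · μ₀ / (1 - μ₀)²`. -/
theorem stmt4 (m : ℕ) (p s : Fin m → ℝ)
    (hp0 : ∀ i, 0 < p i) (hp1 : ∀ i, p i ≤ 1)
    (smin : ℝ) (hsmin : 0 < smin) (hs0 : ∀ i, 0 < s i) (hs : ∀ i, s i ≤ smin)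
    (μ₀ : ℝ) (hμ0 : 0 < μ₀) (hμ1 : μ₀ < 1)
    (hE : ∑ i, s i * p i ≤ μ₀) :
    ((pmfSum fun i => berS (p i) (hp1 i) (s i)).toMeasure {x | 1 < x}).toReal
      < smin * μ₀ / (1 - μ₀) ^ 2 := by
  set μp := pmfSum fun i => berS (p i) (hp1 i) (s i) with hμp
  set M := ∑ i, s i * p i with hM
  set V := ∑ i, (s i) ^ 2 * p i * (1 - p i) with hV
  have hM0 : 0 ≤ M := Finset.sum_nonneg fun i _ => mul_nonneg (hs0 i).le (hp0 i).le
  have hV0 : 0 ≤ V := Finset.sum_nonneg fun i _ =>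
    mul_nonneg (mul_nonneg (sq_nonneg _) (hp0 i).le) (by linarith [hp1 i])
  have hMeas : MeasurableSet {x : ℝ | 1 < x} := measurableSet_Ioi
  set t := (1 - μ₀) ^ 2 with ht
  have ht0 : 0 < t := by have : 0 < 1 - μ₀ := by linarith
                         positivity
  have key : μp.toMeasure {x | 1 < x} * ENNReal.ofReal t ≤ ENNReal.ofReal V := by
    rw [PMF.toMeasure_apply (hs := hMeas), ← ENNReal.tsum_mul_right]
    have hmain := eg_pmfSum_sq m p s (fun i => (hp0 i).le) hp1 M
    calc ∑' x, Set.indicator {x | 1 < x} μp x * ENNReal.ofReal t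
        ≤ ∑' x, μp x * ENNReal.ofReal ((x - M) ^ 2) := by
          apply ENNReal.tsum_le_tsum; intro x
          by_cases hx : x ∈ {y : ℝ | 1 < y}
          · rw [Set.indicator_of_mem hx]
            have hx' : (1 : ℝ) < x := hx
            refine mul_le_mul_right (ENNReal.ofReal_le_ofReal ?_) _
            have h1 : (0:ℝ) ≤ 1 - μ₀ := by linarith
            have h2 : 1 - μ₀ ≤ x - M := by linarith
            calc t = (1 - μ₀) ^ 2 := rfl
              _ ≤ (x - M) ^ 2 := by nlinarith
          · rw [Set.indicator_of_notMem hx]; simp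
      _ = ENNReal.ofReal (V + (M - M) ^ 2) := hmain
      _ = ENNReal.ofReal V := by norm_num
  have hreal : (μp.toMeasure {x | 1 < x}).toReal * t ≤ V := by
    have h2 := ENNReal.toReal_mono ENNReal.ofReal_ne_top key
    rwa [ENNReal.toReal_mul, ENNReal.toReal_ofReal ht0.le, ENNReal.toReal_ofReal hV0] at h2
  set Pr := (μp.toMeasure {x | 1 < x}).toReal with hPr
  have hPrle : Pr ≤ V / t := by
    rw [le_div_iff₀ ht0]; exact hreal
  rcases Nat.eq_zero_or_pos m with hm | hm
  · subst hm
    have hVz : V = 0 := by simp [hV]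
    have hrhs : 0 < smin * μ₀ / t := by positivity
    have : Pr ≤ 0 := by rw [hVz] at hPrle; simpa using hPrle
    linarith
  · have hVlt : V < smin * μ₀ := by
      have hne : (Finset.univ : Finset (Fin m)).Nonempty := by
        have : Nonempty (Fin m) := Fin.pos_iff_nonempty.mp hm
        exact Finset.univ_nonempty
      calc V < ∑ i, smin * (s i * p i) := by
            apply Finset.sum_lt_sum_of_nonempty hne
            intro i _
            nlinarith [hp0 i, hp1 i, hs0 i, hs i, hsmin,
              mul_pos (mul_pos hsmin (hs0 i)) (mul_pos (hp0 i) (hp0 i)),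
              mul_pos (hs0 i) (hp0 i)]
        _ = smin * M := by rw [Finset.mul_sum]
        _ ≤ smin * μ₀ := by nlinarith
    calc Pr ≤ V / t := hPrle
      _ < smin * μ₀ / t := by gcongr
end

section
/- Let X₁,...,X_N be independent scaled Bernoulli random variables, X_i ~ Ber(p_i, s_i) with 0 < s_i ≤ 1, and let B = Σ_i X_i. If P(B > 1) ≤ α for some α < 1, then E(B) ≤ (1 + α)/(1 − α). -/
open MeasureTheory
open scoped NNReal ENNReal

/-- A proof-irrelevant packaging of `berS`. -/
noncomputable def berC (q : ℝ × ℝ) : PMF ℝ :=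
  if h : q.1 ≤ 1 then berS q.1 h q.2 else PMF.pure 0

/-- Sum of scaled Bernoullis given by a list of (probability, size) pairs. -/
noncomputable def sumPMF (l : List (ℝ × ℝ)) : PMF ℝ :=
  (l.map berC).foldr conv (PMF.pure 0)

lemma sumPMF_cons (q : ℝ × ℝ) (l : List (ℝ × ℝ)) :
    sumPMF (q :: l) = conv (berC q) (sumPMF l) := rfl

lemma sumPMF_support_nonneg (l : List (ℝ × ℝ)) (hl : ∀ q ∈ l, 0 ≤ q.2) :
    ∀ x ∈ (sumPMF l).support, 0 ≤ x := by
  induction l with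
  | nil =>
    intro x hx
    simp only [sumPMF, List.map_nil, List.foldr_nil, PMF.support_pure,
      Set.mem_singleton_iff] at hx
    simp [hx]
  | cons q l ih =>
    intro x hx
    rw [sumPMF_cons] at hx
    simp only [conv, PMF.support_bind, PMF.support_map, Set.mem_iUnion,
      Set.mem_image] at hx
    obtain ⟨a, ha, y, hy, rfl⟩ := hx
    have hy0 : 0 ≤ y := ih (fun r hr => hl r (List.mem_cons_of_mem _ hr)) y hy
    have ha0 : 0 ≤ a := by
      have hq2 : 0 ≤ q.2 := hl q (List.mem_cons_self)
      unfold berC at ha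
      split at ha
      · simp only [berS, PMF.support_map, Set.mem_image] at ha
        obtain ⟨b, -, rfl⟩ := ha
        cases b <;> simp [hq2]
      · simp only [PMF.support_pure, Set.mem_singleton_iff] at ha
        simp [ha]
    linarith

lemma conv_berS_apply (p : ℝ) (hp1 : p ≤ 1) (s : ℝ) (Y : PMF ℝ) (c : ℝ) :
    (conv (berS p hp1 s) Y).toMeasure (Set.Ioi c) =
      ENNReal.ofReal p * Y.toMeasure (Set.Ioi (c - s)) +
        (1 - ENNReal.ofReal p) * Y.toMeasure (Set.Ioi c) := by
  have hmeas : MeasurableSet (Set.Ioi c) := measurableSet_Ioi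
  rw [conv, berS, PMF.bind_map, PMF.toMeasure_bind_apply _ _ _ hmeas, tsum_bool]
  simp only [Function.comp, PMF.bernoulli_apply, Bool.cond_false, Bool.cond_true,
    if_true, if_false, Bool.false_eq_true, Bool.true_eq_false]
  rw [PMF.toMeasure_map_apply _ _ _ (measurable_const_add 0) hmeas,
      PMF.toMeasure_map_apply _ _ _ (measurable_const_add s) hmeas]
  have h1 : (fun b : ℝ => 0 + b) ⁻¹' Set.Ioi c = Set.Ioi c := by
    ext x; simp [Set.mem_Ioi]
  have h2 : (fun b : ℝ => s + b) ⁻¹' Set.Ioi c = Set.Ioi (c - s) := by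
    ext x; simp [Set.mem_Ioi, sub_lt_iff_lt_add']
  rw [h1, h2]
  have hc : ((p.toNNReal : ℝ≥0) : ℝ≥0∞) = ENNReal.ofReal p := rfl
  rw [ENNReal.coe_sub, ENNReal.coe_one, hc]
  ring

lemma key (M : ℝ) (l : List (ℝ × ℝ))
    (hl : ∀ q ∈ l, 0 ≤ q.1 ∧ q.1 ≤ 1 ∧ 0 ≤ q.2 ∧ q.2 ≤ 1)
    (hW : (l.map fun q => q.1 * q.2).sum ≤ M) :
    ∀ t : ℝ, 0 ≤ t → t ≤ 1 →
      (l.map fun q => q.1 * q.2).sum ≤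
        (1 - t) + ((sumPMF l).toMeasure (Set.Ioi (1 - t))).toReal * (1 + M) := by
  induction l with
  | nil =>
    intro t ht0 ht1
    have hM : 0 ≤ M := le_trans (by simp) hW
    have h0 : 0 ≤ ((sumPMF []).toMeasure (Set.Ioi (1 - t))).toReal :=
      ENNReal.toReal_nonneg
    simp only [List.map_nil, List.sum_nil]
    nlinarith
  | cons q l ih =>
    intro t ht0 ht1
    obtain ⟨hq1, hq2, hq3, hq4⟩ := hl q (List.mem_cons_self)
    have hl' : ∀ r ∈ l, 0 ≤ r.1 ∧ r.1 ≤ 1 ∧ 0 ≤ r.2 ∧ r.2 ≤ 1 :=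
      fun r hr => hl r (List.mem_cons_of_mem _ hr)
    have hWl : (l.map fun q => q.1 * q.2).sum ≤ M := by
      have : (((q :: l).map fun q => q.1 * q.2).sum)
          = q.1 * q.2 + (l.map fun q => q.1 * q.2).sum := by simp
      nlinarith [this ▸ hW, mul_nonneg hq1 hq3]
    set R := sumPMF l with hR
    set A : ℝ := (R.toMeasure (Set.Ioi (1 - t - q.2))).toReal with hA
    set Bp : ℝ := (R.toMeasure (Set.Ioi (1 - t))).toReal with hB
    -- compute the overflow probability of the convolution
    have hPto : ((sumPMF (q :: l)).toMeasure (Set.Ioi (1 - t))).toReal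
        = q.1 * A + (1 - q.1) * Bp := by
      have hconv : sumPMF (q :: l) = conv (berS q.1 hq2 q.2) R := by
        rw [sumPMF_cons]
        congr 1
        unfold berC
        rw [dif_pos hq2]
      rw [hconv, conv_berS_apply]
      have hfin1 : ENNReal.ofReal q.1 * R.toMeasure (Set.Ioi (1 - t - q.2)) ≠ ⊤ :=
        ENNReal.mul_ne_top ENNReal.ofReal_ne_top (measure_ne_top _ _)
      have hfin2 : (1 - ENNReal.ofReal q.1) * R.toMeasure (Set.Ioi (1 - t)) ≠ ⊤ :=
        ENNReal.mul_ne_top (ne_top_of_le_ne_top ENNReal.one_ne_top tsub_le_self)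
          (measure_ne_top _ _)
      rw [ENNReal.toReal_add hfin1 hfin2, ENNReal.toReal_mul, ENNReal.toReal_mul,
        ENNReal.toReal_ofReal hq1,
        ENNReal.toReal_sub_of_le (ENNReal.ofReal_le_one.mpr hq2) ENNReal.one_ne_top,
        ENNReal.toReal_one, ENNReal.toReal_ofReal hq1]
    have ih1 : (l.map fun q => q.1 * q.2).sum ≤ (1 - t) + Bp * (1 + M) :=
      ih hl' hWl t ht0 ht1
    -- the key step bound
    have h2 : q.2 + (l.map fun q => q.1 * q.2).sum ≤ (1 - t) + A * (1 + M) := by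
      by_cases hts : t + q.2 ≤ 1
      · have := ih hl' hWl (t + q.2) (by linarith) hts
        have hset : (1 : ℝ) - (t + q.2) = 1 - t - q.2 := by ring
        rw [hset] at this
        linarith
      · have hone : R.toMeasure (Set.Ioi (1 - t - q.2)) = 1 := by
          rw [PMF.toMeasure_apply_eq_one_iff _ measurableSet_Ioi]
          intro x hx
          have := sumPMF_support_nonneg l (fun r hr => (hl' r hr).2.2.1) x hx
          simp only [Set.mem_Ioi]
          linarith [not_le.mp hts]
        have hA1 : A = 1 := by rw [hA, hone, ENNReal.toReal_one]
        have hM : 0 ≤ M := by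
          have h0 : 0 ≤ (((q :: l).map fun q => q.1 * q.2).sum) := by
            apply List.sum_nonneg
            intro x hx
            simp only [List.mem_map] at hx
            obtain ⟨r, hr, rfl⟩ := hx
            exact mul_nonneg (hl r hr).1 (hl r hr).2.2.1
          linarith
        rw [hA1]
        nlinarith [hWl]
    -- combine convexly
    have hBp0 : 0 ≤ Bp := ENNReal.toReal_nonneg
    have hA0 : 0 ≤ A := ENNReal.toReal_nonneg
    have hcv1 : q.1 * (q.2 + (l.map fun q => q.1 * q.2).sum)
        ≤ q.1 * ((1 - t) + A * (1 + M)) := mul_le_mul_of_nonneg_left h2 hq1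
    have hcv2 : (1 - q.1) * ((l.map fun q => q.1 * q.2).sum)
        ≤ (1 - q.1) * ((1 - t) + Bp * (1 + M)) :=
      mul_le_mul_of_nonneg_left ih1 (by linarith)
    have hsum : (((q :: l).map fun q => q.1 * q.2).sum)
        = q.1 * q.2 + (l.map fun q => q.1 * q.2).sum := by simp
    rw [hsum, hPto]
    nlinarith [hcv1, hcv2]

/-- If `Xᵢ ~ Ber(pᵢ, sᵢ)` are independent with `0 < sᵢ ≤ 1`, `B = Σᵢ Xᵢ`, and
`ℙ(B > 1) ≤ α < 1`, then `𝔼(B) = Σᵢ pᵢ sᵢ ≤ (1 + α)/(1 − α)`. -/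
theorem stmt6 (N : ℕ) (p s : Fin N → ℝ)
    (hp0 : ∀ i, 0 < p i) (hp1 : ∀ i, p i ≤ 1)
    (hs0 : ∀ i, 0 < s i) (hs1 : ∀ i, s i ≤ 1)
    (α : ℝ) (hα1 : α < 1)
    (hover : ((pmfSum fun i => berS (p i) (hp1 i) (s i)).toMeasure {x | 1 < x}).toReal ≤ α) :
    ∑ i, p i * s i ≤ (1 + α) / (1 - α) := by
  set l : List (ℝ × ℝ) := List.ofFn (fun i => (p i, s i)) with hldef
  have hlist : (pmfSum fun i => berS (p i) (hp1 i) (s i)) = sumPMF l := by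
    unfold pmfSum sumPMF
    congr 1
    rw [hldef, List.map_ofFn]
    congr 1
    funext i
    simp only [Function.comp]
    unfold berC
    rw [dif_pos (hp1 i)]
  have hμ : (l.map fun q => q.1 * q.2).sum = ∑ i, p i * s i := by
    rw [hldef, List.map_ofFn, List.sum_ofFn]
    rfl
  have hμ0 : 0 ≤ ∑ i, p i * s i :=
    Finset.sum_nonneg fun i _ => mul_nonneg (hp0 i).le (hs0 i).le
  have hl : ∀ q ∈ l, 0 ≤ q.1 ∧ q.1 ≤ 1 ∧ 0 ≤ q.2 ∧ q.2 ≤ 1 := by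
    rw [hldef]
    rw [List.forall_mem_ofFn_iff]
    intro i
    exact ⟨(hp0 i).le, hp1 i, (hs0 i).le, hs1 i⟩
  have hkey := key (∑ i, p i * s i) l hl (le_of_eq hμ) 0 le_rfl zero_le_one
  rw [hμ] at hkey
  have hone : (1 : ℝ) - 0 = 1 := by ring
  rw [hone] at hkey
  have hset : ({x : ℝ | 1 < x}) = Set.Ioi (1 : ℝ) := rfl
  rw [hlist, hset] at hover
  set P := ((sumPMF l).toMeasure (Set.Ioi (1 : ℝ))).toReal with hP
  have hP0 : 0 ≤ P := ENNReal.toReal_nonneg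
  have hα0 : 0 ≤ α := le_trans hP0 hover
  set μ := ∑ i, p i * s i with hμdef
  -- μ ≤ 1 + P * (1 + μ) ≤ 1 + α * (1 + μ)
  have hstep : μ ≤ 1 + α * (1 + μ) := by
    have : P * (1 + μ) ≤ α * (1 + μ) :=
      mul_le_mul_of_nonneg_right hover (by linarith)
    linarith
  rw [le_div_iff₀ (by linarith : (0:ℝ) < 1 - α)]
  nlinarith
end

section
/- For every β ∈ [1/2, 1) and every natural number k ≥ 2, Q⁻¹(k, β) ≤ (k/(k+1))·Q⁻¹(k+1, β), where Q(s, λ) = Γ(s, λ)/Γ(s) is the regularized upper incomplete gamma function (equal to P(Poisson(λ) ≤ s−1) for integer s) and Q⁻¹(s, ·) is its inverse with respect to λ. -/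
open ProbabilityTheory
open scoped NNReal
open Real

noncomputable def qf (k : ℕ) (x : ℝ) : ℝ := ∑ n ∈ Finset.range k, Real.exp (-x) * x ^ n / n.factorial

lemma qf_zero {k : ℕ} (hk : 1 ≤ k) : qf k 0 = 1 := by
  unfold qf
  rw [Finset.sum_eq_single 0]
  · simp
  · intro n _ hn
    simp [zero_pow hn]
  · intro h; simp at h; omega

lemma hasDerivAt_qf (k : ℕ) (x : ℝ) :
    HasDerivAt (qf (k+1)) (-(Real.exp (-x) * x ^ k / k.factorial)) x := by
  induction k with
  | zero =>
    have h : HasDerivAt (fun y : ℝ => Real.exp (-y)) (-Real.exp (-x)) x := by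
      simpa using (hasDerivAt_neg x).exp
    have he : qf 1 = fun y : ℝ => Real.exp (-y) := by
      funext y; simp [qf]
    rw [he]
    convert h using 1
    simp
  | succ m ih =>
    have he : qf (m+2) = fun y : ℝ =>
        qf (m+1) y + Real.exp (-y) * y ^ (m+1) / (m+1).factorial := by
      funext y; simp [qf, Finset.sum_range_succ]
    rw [he]
    have hexp : HasDerivAt (fun y : ℝ => Real.exp (-y)) (-Real.exp (-x)) x := by
      simpa using (hasDerivAt_neg x).exp
    have hpow : HasDerivAt (fun y : ℝ => y ^ (m+1)) ((m+1) * x ^ m) x := by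
      simpa using hasDerivAt_pow (m+1) x
    have hterm : HasDerivAt (fun y : ℝ => Real.exp (-y) * y ^ (m+1) / (m+1).factorial)
        ((-Real.exp (-x) * x ^ (m+1) + Real.exp (-x) * ((m+1) * x ^ m)) / (m+1).factorial) x :=
      (hexp.mul hpow).div_const _
    refine (ih.add hterm).congr_deriv ?_

    have hm : (m.factorial : ℝ) ≠ 0 := Nat.cast_ne_zero.mpr (Nat.factorial_ne_zero m)
    have hm1 : ((m+1).factorial : ℝ) ≠ 0 := Nat.cast_ne_zero.mpr (Nat.factorial_ne_zero (m+1))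
    rw [Nat.factorial_succ]
    push_cast
    field_simp
    ring

lemma natfac (k : ℕ) : ∀ j, j < k → (k+j).factorial ≤ k^(2*j+1) * (k-1-j).factorial := by
  intro j
  induction j with
  | zero =>
    intro hk
    obtain ⟨m, rfl⟩ : ∃ m, k = m + 1 := ⟨k - 1, by omega⟩
    simp [Nat.factorial_succ]
  | succ j ih =>
    intro h
    have hj : j < k := by omega
    have h1 := ih hj
    have h2 : (k-1-j).factorial = (k-1-j) * (k-1-(j+1)).factorial := by
      rw [show k-1-j = (k-1-(j+1)) + 1 by omega, Nat.factorial_succ]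
    have h3 : (k+j+1) * (k-1-j) ≤ k*k := by
      obtain ⟨d, hd⟩ : ∃ d, k = d + (j+1) := ⟨k - (j+1), by omega⟩
      subst hd
      have : (d + (j+1)) - 1 - j = d := by omega
      rw [this]
      nlinarith
    calc (k+(j+1)).factorial = (k+j+1) * (k+j).factorial := by
          rw [show k+(j+1) = (k+j)+1 by ring, Nat.factorial_succ]
      _ ≤ (k+j+1) * (k^(2*j+1) * (k-1-j).factorial) := Nat.mul_le_mul_left _ h1
      _ = ((k+j+1) * (k-1-j)) * (k^(2*j+1) * (k-1-(j+1)).factorial) := by rw [h2]; ring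
      _ ≤ (k*k) * (k^(2*j+1) * (k-1-(j+1)).factorial) := Nat.mul_le_mul_right _ h3
      _ = k^(2*(j+1)+1) * (k-1-(j+1)).factorial := by ring

lemma natkey (k j : ℕ) (hj : j < k) :
    k^(k-1-j) * (k+j).factorial ≤ k^(k+j) * (k-1-j).factorial := by
  calc k^(k-1-j) * (k+j).factorial
      ≤ k^(k-1-j) * (k^(2*j+1) * (k-1-j).factorial) := Nat.mul_le_mul_left _ (natfac k j hj)
    _ = k^(k-1-j+(2*j+1)) * (k-1-j).factorial := by rw [← mul_assoc, ← pow_add]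
    _ = k^(k+j) * (k-1-j).factorial := by congr 2; omega

lemma qf_le_half (k : ℕ) (hk : 1 ≤ k) : qf k k ≤ 1/2 := by
  set p : ℕ → ℝ := fun n => Real.exp (-(k:ℝ)) * (k:ℝ)^n / n.factorial with hp
  have hpnn : ∀ n, 0 ≤ p n := by
    intro n
    simp only [hp]
    positivity
  have hsum : HasSum p 1 := by
    have := poissonPMFRealSum (k : ℝ≥0)
    simpa [poissonPMFReal, hp] using this
  have h2 : qf k k = ∑ j ∈ Finset.range k, p (k-1-j) := by
    rw [Finset.sum_range_reflect p k]; rfl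
  have h3 : ∑ j ∈ Finset.range k, p (k-1-j) ≤ ∑ j ∈ Finset.range k, p (k+j) := by
    apply Finset.sum_le_sum
    intro j hj
    have hjk : j < k := Finset.mem_range.mp hj
    have key := natkey k j hjk
    have hfac1 : (0:ℝ) < (k-1-j).factorial := by positivity
    have hfac2 : (0:ℝ) < (k+j).factorial := by positivity
    rw [hp]
    rw [div_le_div_iff₀ hfac1 hfac2]
    have : ((k:ℝ))^(k-1-j) * ((k+j).factorial : ℝ) ≤ (k:ℝ)^(k+j) * ((k-1-j).factorial : ℝ) := by
      exact_mod_cast Nat.cast_le.mpr key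
    nlinarith [Real.exp_pos (-(k:ℝ)), this]
  have h4 : ∑ j ∈ Finset.range k, p (k+j) = ∑ j ∈ Finset.Ico k (k+k), p j := by
    rw [Finset.sum_Ico_eq_sum_range, show k+k-k = k by omega]
  have h5 : ∑ j ∈ Finset.range k, p j + ∑ j ∈ Finset.Ico k (k+k), p j
      = ∑ j ∈ Finset.range (k+k), p j := by
    rw [Finset.range_eq_Ico, Finset.range_eq_Ico]
    exact Finset.sum_Ico_consecutive _ (Nat.zero_le k) (Nat.le_add_right k k)
  have h6 : ∑ j ∈ Finset.range (k+k), p j ≤ 1 := sum_le_hasSum _ (fun i _ => hpnn i) hsum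
  have hq : qf k k = ∑ j ∈ Finset.range k, p j := rfl
  linarith [h2, h3, h4, h5, h6, hq]

lemma pow_exp_max (k : ℕ) (t : ℝ) (ht : 0 ≤ t) :
    Real.exp (-t) * t^k ≤ Real.exp (-(k:ℝ)) * (k:ℝ)^k := by
  rcases Nat.eq_zero_or_pos k with hk | hk
  · subst hk; simp [Real.exp_le_one_iff.mpr (by linarith : -t ≤ 0)]
  have hk0 : (0:ℝ) < k := by exact_mod_cast hk
  have h1 : t/k ≤ Real.exp (t/k - 1) := by linarith [Real.add_one_le_exp (t/k - 1)]
  have h2 : (t/k)^k ≤ (Real.exp (t/k - 1))^k := pow_le_pow_left₀ (div_nonneg ht hk0.le) h1 k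
  have h3 : (Real.exp (t/k - 1))^k = Real.exp ((t/k - 1) * k) := by
    rw [← Real.exp_nat_mul]; ring_nf
  have ht' : t ^ k = (t/k)^k * (k:ℝ)^k := by
    rw [div_pow]; field_simp
  calc Real.exp (-t) * t^k = Real.exp (-t) * (t/k)^k * (k:ℝ)^k := by rw [ht']; ring
    _ ≤ Real.exp (-t) * Real.exp ((t/k - 1) * k) * (k:ℝ)^k := by
        apply mul_le_mul_of_nonneg_right _ (by positivity)
        exact mul_le_mul_of_nonneg_left (h3 ▸ h2) (Real.exp_nonneg _)
    _ = Real.exp (-(k:ℝ)) * (k:ℝ)^k := by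
        rw [← Real.exp_add, show -t + (t/(k:ℝ) - 1) * (k:ℝ) = -(k:ℝ) by
          rw [sub_mul, div_mul_cancel₀ _ (ne_of_gt hk0)]; ring]

lemma qf_step (k : ℕ) : qf (k+1) (k:ℝ) = qf k (k:ℝ) + Real.exp (-(k:ℝ)) * (k:ℝ)^k / k.factorial := by
  simp [qf, Finset.sum_range_succ]

lemma qf_med_step (k : ℕ) : qf k (k:ℝ) ≤ qf (k+1) ((k:ℝ)+1) := by
  set p : ℝ := Real.exp (-(k:ℝ)) * (k:ℝ)^k / k.factorial with hpdef
  set φ : ℝ → ℝ := fun t => qf (k+1) t + t * p with hφ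
  have hd : ∀ t : ℝ, HasDerivAt φ (-(Real.exp (-t) * t^k / k.factorial) + p) t := by
    intro t
    exact (hasDerivAt_qf k t).add (by simpa using (hasDerivAt_id t).mul_const p)
  have hdiff : Differentiable ℝ φ := fun t => (hd t).differentiableAt
  have hmono : MonotoneOn φ (Set.Icc (k:ℝ) ((k:ℝ)+1)) := by
    apply monotoneOn_of_deriv_nonneg (convex_Icc _ _) hdiff.continuous.continuousOn
      hdiff.differentiableOn
    intro x hx
    rw [interior_Icc] at hx
    rw [(hd x).deriv]
    have hx0 : 0 ≤ x := le_trans (Nat.cast_nonneg k) hx.1.le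
    have h1 := pow_exp_max k x hx0
    have hfac : (0:ℝ) < k.factorial := by positivity
    have h2 : Real.exp (-x) * x^k / k.factorial ≤ p := by
      rw [hpdef]
      exact div_le_div_of_nonneg_right h1 hfac.le
    linarith
  have h3 : φ (k:ℝ) ≤ φ ((k:ℝ)+1) :=
    hmono ⟨le_refl _, by linarith⟩ ⟨by linarith, le_refl _⟩ (by linarith)
  have h3' : qf (k+1) (k:ℝ) + (k:ℝ)*p ≤ qf (k+1) ((k:ℝ)+1) + ((k:ℝ)+1)*p := h3
  have h4 := qf_step k
  linarith [h3', h4, hpdef]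

lemma f_nonneg (m : ℕ) {r : ℝ} (hr0 : 0 ≤ r) (hrk : r ≤ (m:ℝ)+1) :
    qf (m+1) r ≤ qf (m+2) (((m:ℝ)+2)/((m:ℝ)+1) * r) := by
  set K : ℝ := (m:ℝ)+1 with hK
  have hK0 : (0:ℝ) < K := by positivity
  set c : ℝ := (K+1)/K with hc
  have hc0 : (0:ℝ) < c := by positivity
  set a : ℝ := c^(m+2)/K with ha
  have ha0 : (0:ℝ) ≤ a := by positivity
  set F : ℝ → ℝ := fun t => qf (m+2) (c*t) - qf (m+1) t with hF
  set w : ℝ → ℝ := fun t => Real.exp (-t) * t^m / m.factorial with hw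
  set g : ℝ → ℝ := fun t => 1 - a * (t * Real.exp (-(t/K))) with hg
  have hwnn : ∀ t : ℝ, 0 ≤ t → 0 ≤ w t := by
    intro t ht
    rw [hw]
    positivity
  -- derivative of F
  have hFd : ∀ t : ℝ, HasDerivAt F (w t * g t) t := by
    intro t
    have hct : HasDerivAt (fun t : ℝ => c * t) c t := by
      simpa using (hasDerivAt_id t).const_mul c
    have d1 : HasDerivAt (fun t : ℝ => qf (m+2) (c*t))
        (-(Real.exp (-(c*t)) * (c*t)^(m+1) / (m+1).factorial) * c) t :=
      (hasDerivAt_qf (m+1) (c*t)).comp t hct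
    have d2 := hasDerivAt_qf m t
    have := d1.sub d2
    refine this.congr_deriv ?_
    have hexp : Real.exp (-(c*t)) = Real.exp (-t) * Real.exp (-(t/K)) := by
      rw [← Real.exp_add]
      congr 1
      rw [hc]
      field_simp
      ring
    have hfacm : (m.factorial : ℝ) ≠ 0 := Nat.cast_ne_zero.mpr (Nat.factorial_ne_zero m)
    have hfacm1 : ((m+1).factorial : ℝ) = K * m.factorial := by
      rw [Nat.factorial_succ, hK]
      push_cast
      ring
    rw [hw, hg, ha, hexp, hfacm1, mul_pow]
    have hKne : K ≠ 0 := ne_of_gt hK0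
    field_simp
    ring
  have hFdiff : Differentiable ℝ F := fun t => (hFd t).differentiableAt
  -- h monotone on [0,K]
  have hmono_h : MonotoneOn (fun t : ℝ => t * Real.exp (-(t/K))) (Set.Icc 0 K) := by
    have hd : ∀ t : ℝ, HasDerivAt (fun t : ℝ => t * Real.exp (-(t/K)))
        ((1 - t/K) * Real.exp (-(t/K))) t := by
      intro t
      have h1 : HasDerivAt (fun t : ℝ => -(t/K)) (-(1/K)) t := ((hasDerivAt_id t).div_const K).neg
      have h2 : HasDerivAt (fun t : ℝ => Real.exp (-(t/K))) (Real.exp (-(t/K)) * -(1/K)) t :=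
        (Real.hasDerivAt_exp _).comp t h1
      have := (hasDerivAt_id t).mul h2
      refine this.congr_deriv ?_
      simp only [id]
      field_simp
      ring
    have hdiff : Differentiable ℝ (fun t : ℝ => t * Real.exp (-(t/K))) :=
      fun t => (hd t).differentiableAt
    apply monotoneOn_of_deriv_nonneg (convex_Icc _ _) hdiff.continuous.continuousOn
      hdiff.differentiableOn
    intro x hx
    rw [interior_Icc] at hx
    rw [(hd x).deriv]
    apply mul_nonneg _ (Real.exp_nonneg _)
    rw [sub_nonneg, div_le_one hK0]
    exact hx.2.le
  -- g antitone on [0,K]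
  have hganti : ∀ x ∈ Set.Icc (0:ℝ) K, ∀ y ∈ Set.Icc (0:ℝ) K, x ≤ y → g y ≤ g x := by
    intro x hx y hy hxy
    have := hmono_h hx hy hxy
    simp only [hg]
    nlinarith
  have hF0 : F 0 = 0 := by
    have : c * 0 = 0 := mul_zero c
    rw [hF]
    simp only [this, qf_zero (by omega : 1 ≤ m+2), qf_zero (by omega : 1 ≤ m+1)]
    ring
  have hrK : r ≤ K := hrk
  have hgoal : 0 ≤ F r := by
    by_cases hgr : 0 ≤ g r
    · -- F monotone on [0, r]
      have hmonoF : MonotoneOn F (Set.Icc 0 r) := by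
        apply monotoneOn_of_deriv_nonneg (convex_Icc _ _) hFdiff.continuous.continuousOn
          hFdiff.differentiableOn
        intro x hx
        rw [interior_Icc] at hx
        rw [(hFd x).deriv]
        apply mul_nonneg (hwnn x hx.1.le)
        have : g r ≤ g x := hganti x ⟨hx.1.le, le_trans hx.2.le hrK⟩ r ⟨hr0, hrK⟩ hx.2.le
        linarith
      have := hmonoF (Set.mem_Icc.mpr ⟨le_refl 0, hr0⟩) (Set.mem_Icc.mpr ⟨hr0, le_refl r⟩) hr0
      linarith [hF0]
    · -- F antitone on [r, K]
      push_neg at hgr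
      have hantiF : AntitoneOn F (Set.Icc r K) := by
        apply antitoneOn_of_deriv_nonpos (convex_Icc _ _) hFdiff.continuous.continuousOn
          hFdiff.differentiableOn
        intro x hx
        rw [interior_Icc] at hx
        rw [(hFd x).deriv]
        have hx0 : 0 ≤ x := le_trans hr0 hx.1.le
        have hgx : g x ≤ g r := hganti r ⟨hr0, hrK⟩ x ⟨hx0, hx.2.le⟩ hx.1.le
        have := hwnn x hx0
        nlinarith
      have h1 := hantiF (Set.mem_Icc.mpr ⟨le_refl r, hrK⟩) (Set.mem_Icc.mpr ⟨hrK, le_refl K⟩) hrK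
      -- F K ≥ 0 from qf_med_step
      have hcK : c * K = K + 1 := by
        rw [hc]
        field_simp
      have hFK : F K = qf (m+2) (K+1) - qf (m+1) K := by rw [hF]; simp only [hcK]
      have hstep := qf_med_step (m+1)
      have hcast : ((m+1 : ℕ) : ℝ) = K := by rw [hK]; push_cast; ring
      rw [hcast] at hstep
      have hFK0 : 0 ≤ F K := by rw [hFK]; linarith
      linarith
  have : F r = qf (m+2) (c*r) - qf (m+1) r := rfl
  have hceq : c = ((m:ℝ)+2)/((m:ℝ)+1) := by rw [hc, hK]; ring_nf
  rw [← hceq]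
  linarith [hgoal]

lemma qf_strictAnti (m : ℕ) : StrictAntiOn (qf (m+1)) (Set.Ici 0) := by
  apply strictAntiOn_of_deriv_neg (convex_Ici 0)
  · exact (Differentiable.continuous (fun t => (hasDerivAt_qf m t).differentiableAt)).continuousOn
  · intro x hx
    rw [interior_Ici] at hx
    rw [(hasDerivAt_qf m x).deriv]
    have hx' : (0:ℝ) < x := hx
    have : (0:ℝ) < Real.exp (-x) * x^m / m.factorial := by positivity
    linarith

/-- `Q(k, λ) = ℙ(Poisson(λ) < k) = ℙ(Poisson(λ) ≤ k - 1)`, the regularized upper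
incomplete gamma function `Γ(k,λ)/Γ(k)` for integer `k`. -/
noncomputable def Q (k : ℕ) (r : ℝ≥0) : ℝ := ∑ n ∈ Finset.range k, poissonPMFReal r n

/-- Inverse of `Q(k, ·)` in the second argument: `Q⁻¹(k, β) = max {λ > 0 : Q(k, λ) ≥ β}`. -/
noncomputable def Qinv (k : ℕ) (β : ℝ) : ℝ :=
  sSup {r : ℝ | 0 < r ∧ β ≤ Q k (Real.toNNReal r)}

lemma Q_eq_qf (j : ℕ) {r : ℝ} (hr : 0 ≤ r) : Q j (Real.toNNReal r) = qf j r := by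
  unfold Q qf poissonPMFReal
  simp [Real.coe_toNNReal r hr]

/-- For `β ∈ [1/2, 1)` and `k ≥ 2`: `Q⁻¹(k, β) ≤ (k/(k+1))·Q⁻¹(k+1, β)`. -/
theorem stmt10 (β : ℝ) (hβ0 : 1 / 2 ≤ β) (hβ1 : β < 1) (k : ℕ) (hk : 2 ≤ k) :
    Qinv k β ≤ ((k : ℝ) / (k + 1)) * Qinv (k + 1) β := by
  obtain ⟨m, rfl⟩ : ∃ m, k = m + 1 := ⟨k - 1, by omega⟩
  set k := m + 1 with hkdef
  have hkR : (0:ℝ) < (k:ℕ) := by positivity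
  set A : Set ℝ := {r : ℝ | 0 < r ∧ β ≤ Q k (Real.toNNReal r)} with hA
  set B : Set ℝ := {r : ℝ | 0 < r ∧ β ≤ Q (k+1) (Real.toNNReal r)} with hB
  set c : ℝ := ((k:ℝ)+1)/(k:ℝ) with hc
  have hc0 : (0:ℝ) < c := by positivity
  -- B is bounded above
  have hBub : ∀ r ∈ B, r ≤ (k:ℝ)+1 := by
    intro r hr
    obtain ⟨hr0, hrβ⟩ := hr
    by_contra hcon
    push_neg at hcon
    have hq : Q (k+1) (Real.toNNReal r) = qf (k+1) r := Q_eq_qf (k+1) hr0.le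
    have hlt : qf (k+1) r < qf (k+1) ((k:ℝ)+1) := by
      apply qf_strictAnti k (Set.mem_Ici.mpr (by positivity)) (Set.mem_Ici.mpr hr0.le) hcon
    have hhalf := qf_le_half (k+1) (by omega)
    have hcast : ((k+1 : ℕ) : ℝ) = (k:ℝ)+1 := by push_cast; ring
    rw [hcast] at hhalf
    rw [hq] at hrβ
    linarith
  have hBbdd : BddAbove B := ⟨(k:ℝ)+1, hBub⟩
  -- A nonempty
  have hAne : A.Nonempty := by
    have hdiff : Differentiable ℝ (qf k) := fun t => (hasDerivAt_qf m t).differentiableAt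
    have hcont : ContinuousAt (qf k) 0 := hdiff.continuous.continuousAt
    have h1 : qf k 0 = 1 := qf_zero (by omega)
    have hopen : {x : ℝ | β < qf k x} ∈ nhds (0:ℝ) := by
      have : Set.Ioi β ∈ nhds (qf k 0) := by
        rw [h1]
        exact Ioi_mem_nhds (by linarith)
      exact hcont this
    obtain ⟨ε, hε0, hsub⟩ := Metric.mem_nhds_iff.mp hopen
    refine ⟨ε/2, by positivity, ?_⟩
    have hmem : (ε/2 : ℝ) ∈ Metric.ball (0:ℝ) ε := by
      rw [Metric.mem_ball, dist_zero_right, Real.norm_eq_abs,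
        abs_of_pos (by linarith : (0:ℝ) < ε/2)]
      linarith
    have := hsub hmem
    rw [Q_eq_qf k (by positivity : (0:ℝ) ≤ ε/2)]
    exact le_of_lt this
  -- scaling map
  have hscale : ∀ r ∈ A, c * r ∈ B := by
    intro r hr
    obtain ⟨hr0, hrβ⟩ := hr
    rw [Q_eq_qf k hr0.le] at hrβ
    -- r ≤ k
    have hrk : r ≤ (k:ℝ) := by
      by_contra hcon
      push_neg at hcon
      have hlt : qf k r < qf k (k:ℝ) :=
        qf_strictAnti m (Set.mem_Ici.mpr (by positivity)) (Set.mem_Ici.mpr hr0.le) hcon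
      have hhalf := qf_le_half k (by omega)
      linarith
    have hkey := f_nonneg m hr0.le (by rw [hkdef] at hrk; push_cast at hrk ⊢; linarith)
    have hceq : ((m:ℝ)+2)/((m:ℝ)+1) = c := by rw [hc, hkdef]; push_cast; ring_nf
    rw [hceq] at hkey
    have hm1 : qf (m+1) r = qf k r := rfl
    have hm2 : qf (m+2) (c*r) = qf (k+1) (c*r) := rfl
    constructor
    · positivity
    · rw [Q_eq_qf (k+1) (by positivity : (0:ℝ) ≤ c*r)]
      calc β ≤ qf k r := hrβ
        _ ≤ qf (k+1) (c*r) := by rw [← hm1, ← hm2] at *; exact hkey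
  -- conclude
  have hfinal : Qinv k β ≤ ((k:ℝ)/((k:ℝ)+1)) * Qinv (k+1) β := by
    unfold Qinv
    apply csSup_le hAne
    intro r hrA
    have h1 : c * r ≤ sSup {r : ℝ | 0 < r ∧ β ≤ Q (k+1) (Real.toNNReal r)} :=
      le_csSup hBbdd (hscale r hrA)
    have h2 : ((k:ℝ)/((k:ℝ)+1)) * (c * r) = r := by
      rw [hc]
      field_simp
    calc r = ((k:ℝ)/((k:ℝ)+1)) * (c * r) := h2.symm
      _ ≤ ((k:ℝ)/((k:ℝ)+1)) * sSup {r : ℝ | 0 < r ∧ β ≤ Q (k+1) (Real.toNNReal r)} := by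
          apply mul_le_mul_of_nonneg_left h1 (by positivity)
  convert hfinal using 2 <;> push_cast <;> ring
end

section
/- The inequality Q(k, λ) ≤ Q(k+1, (k+1)λ/k) holds for all integers k ≥ 2 and all 0 < λ ≤ k(k−1)/(k+1), where Q(k,λ) = Γ(k,λ)/Γ(k) = P(Poisson(λ) ≤ k−1). -/
open ProbabilityTheory
open scoped NNReal

noncomputable def fQ (k : ℕ) (x : ℝ) : ℝ :=
  ∑ n ∈ Finset.range k, Real.exp (-x) * x ^ n / n.factorial

lemma fQ_hasDerivAt (k : ℕ) (x : ℝ) :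
    HasDerivAt (fQ (k + 1)) (-(Real.exp (-x) * x ^ k / k.factorial)) x := by
  induction k with
  | zero =>
      have h : HasDerivAt (fun y : ℝ => Real.exp (-y)) (Real.exp (-x) * (-1)) x :=
        (hasDerivAt_neg x).exp
      have h2 : HasDerivAt (fQ 1) (Real.exp (-x) * (-1)) x := by
        convert h using 1
        ext y
        simp [fQ]
      convert h2 using 1
      simp
  | succ n ih =>
      have hterm : HasDerivAt (fun y : ℝ => Real.exp (-y) * y ^ (n + 1) / (n + 1).factorial)
          ((Real.exp (-x) * (-1) * x ^ (n + 1) +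
            Real.exp (-x) * ((n + 1 : ℕ) * x ^ (n + 1 - 1))) / (n + 1).factorial) x :=
        (((hasDerivAt_neg x).exp.mul (hasDerivAt_pow (n + 1) x))).div_const _
      have hsum : HasDerivAt (fun y => fQ (n + 1) y + Real.exp (-y) * y ^ (n + 1) / (n + 1).factorial)
          _ x := ih.add hterm
      have heq : (fun y => fQ (n + 1) y + Real.exp (-y) * y ^ (n + 1) / (n + 1).factorial)
          = fQ (n + 2) := by
        ext y
        simp [fQ, Finset.sum_range_succ]
      rw [heq] at hsum
      convert hsum using 1
      have h1 : ((n + 1).factorial : ℝ) = (n + 1) * n.factorial := by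
        push_cast [Nat.factorial_succ]; ring
      have h2 : (n.factorial : ℝ) ≠ 0 := Nat.cast_ne_zero.mpr n.factorial_ne_zero
      simp only [Nat.add_sub_cancel]
      rw [h1]
      push_cast
      field_simp
      ring

lemma mono_aux (k : ℕ) {x y : ℝ} (hx : 0 < x) (hxy : x ≤ y) (hy : y ≤ k) :
    Real.exp (-x) * x ^ k ≤ Real.exp (-y) * y ^ k := by
  have hy0 : 0 < y := lt_of_lt_of_le hx hxy
  rcases Nat.eq_zero_or_pos k with hk0 | hk0
  · exfalso; subst hk0; push_cast at hy; linarith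
  have hk0' : (0 : ℝ) < k := by exact_mod_cast hk0
  have key : x ≤ y * Real.exp ((x - y) / k) := by
    have h1 : 1 + (x - y) / k ≤ Real.exp ((x - y) / k) := by
      rw [add_comm]; exact Real.add_one_le_exp _
    have h2 : y * (1 + (x - y) / k) ≤ y * Real.exp ((x - y) / k) :=
      mul_le_mul_of_nonneg_left h1 hy0.le
    refine le_trans ?_ h2
    have h3 : y * (1 + (x - y) / k) = y * (k + (x - y)) / k := by field_simp
    rw [h3, le_div_iff₀ hk0']
    nlinarith [mul_nonneg (sub_nonneg.mpr hxy) (sub_nonneg.mpr hy)]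
  have hpow : x ^ k ≤ (y * Real.exp ((x - y) / k)) ^ k :=
    pow_le_pow_left₀ hx.le key k
  have hrw : (y * Real.exp ((x - y) / k)) ^ k = y ^ k * Real.exp (x - y) := by
    rw [mul_pow, ← Real.exp_nat_mul]
    congr 2
    field_simp
  rw [hrw] at hpow
  calc Real.exp (-x) * x ^ k ≤ Real.exp (-x) * (y ^ k * Real.exp (x - y)) :=
        mul_le_mul_of_nonneg_left hpow (Real.exp_pos (-x)).le
    _ = y ^ k * (Real.exp (-x) * Real.exp (x - y)) := by ring
    _ = Real.exp (-y) * y ^ k := by rw [← Real.exp_add]; ring_nf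

lemma Q_eq_fQ (k : ℕ) (r : ℝ≥0) : Q k r = fQ k r := rfl

/-- For `k ≥ 2` and `0 < λ ≤ k(k−1)/(k+1)`: `Q(k, λ) ≤ Q(k+1, (k+1)λ/k)`. -/
theorem stmt14 (k : ℕ) (hk : 2 ≤ k) (lam : ℝ≥0) (hlam0 : 0 < lam)
    (hlam : lam ≤ (k : ℝ≥0) * ((k : ℝ≥0) - 1) / ((k : ℝ≥0) + 1)) :
    Q k lam ≤ Q (k + 1) (((k : ℝ≥0) + 1) * lam / (k : ℝ≥0)) := by
  have hk1 : 1 ≤ k := le_trans one_le_two hk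
  have hkk : k - 1 + 1 = k := Nat.succ_pred_eq_of_pos (lt_of_lt_of_le two_pos hk)
  set a : ℝ := (lam : ℝ) with ha
  have ha0 : (0 : ℝ) < a := hlam0
  have hk0 : (0 : ℝ) < (k : ℝ) := by exact_mod_cast lt_of_lt_of_le two_pos hk
  have hk2 : (2 : ℝ) ≤ (k : ℝ) := by exact_mod_cast hk
  set m : ℝ := ((k : ℝ) + 1) * a / k with hm
  have hμ : ((((k : ℝ≥0) + 1) * lam / (k : ℝ≥0) : ℝ≥0) : ℝ) = m := by
    push_cast; ring
  have ham : a ≤ m := by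
    rw [hm, le_div_iff₀ hk0]; nlinarith
  have hm0 : 0 < m := lt_of_lt_of_le ha0 ham
  -- a ≤ k (k-1)/(k+1) over ℝ
  have hlamR : a ≤ (k : ℝ) * ((k : ℝ) - 1) / ((k : ℝ) + 1) := by
    have h1 : (1 : ℝ≥0) ≤ (k : ℝ≥0) := by exact_mod_cast hk1
    have := NNReal.coe_le_coe.mpr hlam
    rw [NNReal.coe_div, NNReal.coe_mul, NNReal.coe_sub h1] at this
    push_cast at this ⊢
    convert this using 2
  have hmk : m ≤ (k : ℝ) - 1 := by
    rw [hm, div_le_iff₀ hk0]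
    have hk1' : (0 : ℝ) < (k : ℝ) + 1 := by linarith
    rw [le_div_iff₀ hk1'] at hlamR
    nlinarith
  have hmk' : m ≤ ((k - 1 : ℕ) : ℝ) := by
    have : ((k - 1 : ℕ) : ℝ) = (k : ℝ) - 1 := by
      push_cast [Nat.cast_sub hk1]; ring
    rw [this]; exact hmk
  set C : ℝ := Real.exp (-m) * m ^ (k - 1) / (k - 1).factorial with hC
  have hfac : (0 : ℝ) < ((k - 1).factorial : ℝ) := by exact_mod_cast (k - 1).factorial_pos
  -- derivative bound on Icc a m
  have hderiv : ∀ x ∈ Set.Icc a m, HasDerivWithinAt (fQ k)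
      (-(Real.exp (-x) * x ^ (k - 1) / (k - 1).factorial)) (Set.Icc a m) x := by
    intro x hx
    have := fQ_hasDerivAt (k - 1) x
    rw [hkk] at this
    exact this.hasDerivWithinAt
  have hbound : ∀ x ∈ Set.Icc a m,
      ‖-(Real.exp (-x) * x ^ (k - 1) / (k - 1).factorial)‖ ≤ C := by
    intro x hx
    have hx0 : 0 < x := lt_of_lt_of_le ha0 hx.1
    have hmono := mono_aux (k - 1) hx0 hx.2 hmk'
    rw [norm_neg, Real.norm_eq_abs, abs_of_nonneg (by positivity)]
    rw [hC]
    exact div_le_div_of_nonneg_right hmono hfac.le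
  have hlip := Convex.norm_image_sub_le_of_norm_hasDerivWithin_le hderiv hbound
    (convex_Icc a m) (Set.left_mem_Icc.mpr ham) (Set.right_mem_Icc.mpr ham)
  rw [Real.norm_eq_abs, Real.norm_eq_abs, abs_of_nonneg (sub_nonneg.mpr ham)] at hlip
  have hstep : fQ k a ≤ fQ k m + C * (m - a) := by
    have := (abs_le.mp hlip).1
    linarith
  have hCsmall : C * (m - a) ≤ Real.exp (-m) * m ^ k / k.factorial := by
    have hma : m - a = a / k := by rw [hm]; field_simp; ring
    have hkfac : (k.factorial : ℝ) = (k : ℝ) * ((k - 1).factorial : ℝ) := by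
      rw [← Nat.mul_factorial_pred (by omega : k ≠ 0)]
      push_cast
      ring
    have hmpow : m ^ k = m ^ (k - 1) * m := by
      rw [← pow_succ, hkk]
    rw [hma, hC, hkfac, hmpow, div_mul_div_comm,
      div_le_div_iff₀ (by positivity) (by positivity)]
    nlinarith [mul_le_mul_of_nonneg_right
      (mul_le_mul_of_nonneg_left ham (by positivity : (0:ℝ) ≤ Real.exp (-m) * m ^ (k - 1)))
      (by positivity : (0:ℝ) ≤ (k : ℝ) * ((k - 1).factorial : ℝ))]
  have hfinal : fQ (k + 1) m = fQ k m + Real.exp (-m) * m ^ k / k.factorial := by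
    simp [fQ, Finset.sum_range_succ]
  rw [Q_eq_fQ, Q_eq_fQ, hμ, hfinal]
  linarith
end

section
/- For 0 < α ≤ 1/4 there exist a constant c > 0 and n = c·α^{−1/2} (up to rounding) such that if X₁,...,X_n are i.i.d. Bernoulli(2α) variables, then P(Σ_{i=1}^n X_i ≤ 1) ≥ 1 − α. In particular, n = Ω(α^{−1/2}) i.i.d. Bernoulli(2α) items can be packed into a single bin of capacity 1 (counting each item as size 1) while keeping the overflow probability at most α. -/
open MeasureTheory
open scoped NNReal ENNReal

/-- `partSum f n` is the distribution of `S_n = Σ_{i<n} f i` for independent items. -/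
noncomputable def partSum (f : ℕ → PMF ℝ) : ℕ → PMF ℝ
  | 0 => PMF.pure 0
  | n + 1 => conv (partSum f n) (f n)

lemma pmf_toMeasure_eq_tsum (X : PMF ℝ) {s : Set ℝ} (hs : MeasurableSet s) :
    X.toMeasure s = ∑' a, X a * s.indicator 1 a := by
  rw [PMF.toMeasure_apply _ hs]
  refine tsum_congr fun a => ?_
  by_cases h : a ∈ s <;> simp [Set.indicator, h]

lemma conv_ber_Ioi (X : PMF ℝ) (p : ℝ) (hp : p ≤ 1) (c : ℝ) :
    (conv X (berS p hp 1)).toMeasure (Set.Ioi c) =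
      (1 - ENNReal.ofReal p) * X.toMeasure (Set.Ioi c)
        + ENNReal.ofReal p * X.toMeasure (Set.Ioi (c - 1)) := by
  set q := ENNReal.ofReal p with hq
  have key : ∀ a : ℝ, ((berS p hp 1).map (fun b => a + b)).toMeasure (Set.Ioi c)
      = (1 - q) * (Set.Ioi c).indicator 1 a + q * (Set.Ioi (c-1)).indicator 1 a := by
    intro a
    rw [PMF.toMeasure_map_apply _ _ _ (measurable_const_add a) measurableSet_Ioi]
    rw [berS, PMF.toMeasure_map_apply _ _ _ (measurable_from_top) (by measurability)]
    rw [PMF.toMeasure_apply _ (by trivial), tsum_bool]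
    have m0 : (false ∈ (fun b : Bool => if b = true then (1:ℝ) else 0) ⁻¹' ((fun x => a + x) ⁻¹' Set.Ioi c)) ↔ c < a := by
      simp [Set.mem_Ioi]
    have m1 : (true ∈ (fun b : Bool => if b = true then (1:ℝ) else 0) ⁻¹' ((fun x => a + x) ⁻¹' Set.Ioi c)) ↔ c - 1 < a := by
      simp [Set.mem_Ioi]; constructor <;> intro <;> linarith
    have hq' : ((Real.toNNReal p : ℝ≥0) : ℝ≥0∞) = q := rfl
    simp only [Set.indicator_apply, m0, m1, PMF.bernoulli_apply, hq', Bool.cond_false, Bool.cond_true,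
      Set.mem_Ioi]
    have h2 : c - a < 1 ↔ c - 1 < a := by constructor <;> intro <;> linarith
    by_cases hc : c < a <;> by_cases hc1 : c - 1 < a <;>
      simp [Set.indicator_apply, Set.mem_Ioi, PMF.bernoulli_apply, hq', h2, hc, hc1]
  unfold conv
  rw [PMF.toMeasure_bind_apply _ _ _ measurableSet_Ioi]
  simp_rw [key, mul_add]
  rw [ENNReal.tsum_add]
  have hs : ∀ (r : ℝ≥0∞) (s : Set ℝ), MeasurableSet s →
      ∑' a, X a * (r * s.indicator 1 a) = r * X.toMeasure s := by
    intro r s hms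
    rw [pmf_toMeasure_eq_tsum X hms, ← ENNReal.tsum_mul_left]
    exact tsum_congr fun a => by ring
  rw [hs _ _ measurableSet_Ioi, hs _ _ measurableSet_Ioi]

lemma partSum_Ioi_bounds (p : ℝ) (hp : p ≤ 1) (n : ℕ) :
    (partSum (fun _ => berS p hp 1) n).toMeasure (Set.Ioi (0:ℝ)) ≤ n * ENNReal.ofReal p ∧
    (partSum (fun _ => berS p hp 1) n).toMeasure (Set.Ioi (1:ℝ)) ≤
      (n : ℝ≥0∞)^2 * (ENNReal.ofReal p)^2 := by
  set q := ENNReal.ofReal p with hq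
  induction n with
  | zero =>
    constructor <;> · rw [partSum, PMF.toMeasure_pure_apply _ _ measurableSet_Ioi]; simp
  | succ n ih =>
    obtain ⟨ih0, ih1⟩ := ih
    have hrec : ∀ c : ℝ, (partSum (fun _ => berS p hp 1) (n+1)).toMeasure (Set.Ioi c) =
        (1 - q) * (partSum (fun _ => berS p hp 1) n).toMeasure (Set.Ioi c)
          + q * (partSum (fun _ => berS p hp 1) n).toMeasure (Set.Ioi (c - 1)) := by
      intro c
      rw [partSum]
      exact conv_ber_Ioi _ p hp c
    have hle1 : ∀ s : Set ℝ, (partSum (fun _ => berS p hp 1) n).toMeasure s ≤ 1 :=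
      fun s => prob_le_one
    constructor
    · rw [hrec 0]
      calc (1 - q) * _ + q * _
          ≤ 1 * ((n : ℝ≥0∞) * q) + q * 1 := by
            exact add_le_add (mul_le_mul' tsub_le_self ih0) (mul_le_mul' le_rfl (hle1 _))
        _ = ((n : ℕ) + 1 : ℝ≥0∞) * q := by ring
        _ = ((n + 1 : ℕ) : ℝ≥0∞) * q := by push_cast; ring
    · rw [hrec 1]
      have h10 : (1:ℝ) - 1 = 0 := by norm_num
      rw [h10]
      calc (1 - q) * _ + q * _
          ≤ 1 * ((n : ℝ≥0∞)^2 * q^2) + q * ((n : ℝ≥0∞) * q) := by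
            exact add_le_add (mul_le_mul' tsub_le_self ih1) (mul_le_mul' le_rfl ih0)
        _ = ((n : ℝ≥0∞)^2 + n) * q^2 := by ring
        _ ≤ ((n : ℝ≥0∞) + 1)^2 * q^2 := by
            refine mul_le_mul' ?_ le_rfl
            have : ((n^2 + n : ℕ) : ℝ≥0∞) ≤ (((n+1)^2 : ℕ) : ℝ≥0∞) :=
              Nat.cast_le.mpr (by nlinarith)
            push_cast at this
            convert this using 1 <;> ring
        _ = ((n + 1 : ℕ) : ℝ≥0∞)^2 * q^2 := by push_cast; ring

/-- There is a constant `c > 0` such that for every `0 < α ≤ 1/4` there is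
`n ≥ c·α^{−1/2}` for which the sum of `n` i.i.d. `Ber(2α)` variables satisfies
`ℙ(Σ Xᵢ ≤ 1) ≥ 1 − α`: i.e. `Ω(α^{−1/2})` such items fit in one bin. -/
theorem stmt15 :
    ∃ c : ℝ, 0 < c ∧ ∀ α : ℝ, 0 < α → α ≤ 1 / 4 →
      ∃ n : ℕ, c * α ^ (-(1 : ℝ) / 2) ≤ (n : ℝ) ∧
        (∀ h2α : 2 * α ≤ 1,
          ENNReal.ofReal (1 - α) ≤
            (partSum (fun _ => berS (2 * α) h2α 1) n).toMeasure (Set.Iic 1)) := by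
  refine ⟨1/8, by norm_num, fun α hα0 hα4 => ?_⟩
  set t : ℝ := α ^ (-(1 : ℝ) / 2) with htdef
  have ht0 : 0 < t := Real.rpow_pos_of_pos hα0 _
  have ht2 : t ^ 2 = 1 / α := by
    rw [htdef, ← Real.rpow_natCast (α ^ (-(1:ℝ)/2)) 2, ← Real.rpow_mul hα0.le]
    norm_num [Real.rpow_neg_one]
  have ht_ge : 2 ≤ t := by nlinarith [one_div_le_one_div_of_le hα0 hα4]
  refine ⟨⌈(1/8 : ℝ) * t⌉₊, Nat.le_ceil _, ?_⟩
  set n : ℕ := ⌈(1/8 : ℝ) * t⌉₊ with hndef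
  have hn_le : (n : ℝ) ≤ t / 2 := by
    by_cases h : (1/8 : ℝ) * t ≤ 1
    · have : n ≤ 1 := Nat.ceil_le.mpr (by simpa using h)
      have : (n : ℝ) ≤ 1 := by exact_mod_cast this
      linarith
    · have h1 : (n : ℝ) < (1/8 : ℝ) * t + 1 :=
        Nat.ceil_lt_add_one (by positivity)
      push_neg at h
      nlinarith
  have hkey : 4 * (n : ℝ)^2 * α^2 ≤ α := by
    have h1 : (n:ℝ)^2 ≤ t^2/4 := by nlinarith [Nat.cast_nonneg (α := ℝ) n]
    have h2 : t^2 * α = 1 := by rw [ht2]; field_simp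
    nlinarith [mul_le_mul_of_nonneg_right h1 (by positivity : (0:ℝ) ≤ 4*α^2)]
  intro h2α
  obtain ⟨-, hb1⟩ := partSum_Ioi_bounds (2*α) h2α n
  set μ := (partSum (fun _ => berS (2 * α) h2α 1) n).toMeasure with hμ
  have hcompl : μ (Set.Iic 1) = 1 - μ (Set.Ioi 1) := by
    rw [← Set.compl_Ioi, measure_compl measurableSet_Ioi (measure_ne_top _ _), measure_univ]
  have hq : ((n : ℝ≥0∞))^2 * (ENNReal.ofReal (2*α))^2 ≤ ENNReal.ofReal α := by
    have e1 : ((n : ℝ≥0∞))^2 * (ENNReal.ofReal (2*α))^2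
        = ENNReal.ofReal ((n:ℝ)^2 * (2*α)^2) := by
      rw [← ENNReal.ofReal_pow (by linarith), ← ENNReal.ofReal_natCast n,
        ← ENNReal.ofReal_pow (Nat.cast_nonneg n), ← ENNReal.ofReal_mul (by positivity)]
    rw [e1]
    exact ENNReal.ofReal_le_ofReal (by nlinarith)
  have hsum : ENNReal.ofReal (1 - α) + μ (Set.Ioi 1) ≤ 1 := by
    calc ENNReal.ofReal (1 - α) + μ (Set.Ioi 1)
        ≤ ENNReal.ofReal (1 - α) + ENNReal.ofReal α :=
          by gcongr; exact le_trans hb1 hq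
      _ = ENNReal.ofReal 1 := by rw [← ENNReal.ofReal_add (by linarith) hα0.le]; norm_num
      _ = 1 := ENNReal.ofReal_one
  rw [hcompl]
  exact ENNReal.le_sub_of_add_le_right (measure_ne_top _ _) hsum
end
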